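/- Let p = [b_1^{a_1} ⋯ b_r^{a_r}] (b_1 ≥ ⋯ ≥ b_r) be an orthogonal partition of 2n in which every b_i is odd. Then Σ_i a_i is even, 2n* = Σ_i a_i, and with P := [p_1 p_1 (2n*−1) 1] (the union of two copies of p_1 and extra parts 2n*−1 and 1) one has P^{SO_{2n}} = (p^t)_{SO_{2n}}. -/

import Mathlib

namespace JiangWF

/-- `sCount p i` : the number of parts of `p` that are `≥ i`. -/
def sCount (p : Multiset ℕ) (i : ℕ) : ℕ := (p.filter (fun a => i ≤ a)).card

/-- `rCount p i` : the number of parts of `p` equal to `i`. -/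
def rCount (p : Multiset ℕ) (i : ℕ) : ℕ := p.count i

/-- The largest part of `p` (`0` for the empty partition). -/
def maxPart (p : Multiset ℕ) : ℕ := p.sup

/-- The smallest part of `p` (`0` for the empty partition). -/
noncomputable def minPart (p : Multiset ℕ) : ℕ := sInf {a : ℕ | a ∈ p}

/-- The transpose partition: its `i`-th part is `sCount p i`, for `1 ≤ i ≤ maxPart p`. -/
def transpose (p : Multiset ℕ) : Multiset ℕ :=
  (Multiset.range (maxPart p)).map fun i => sCount p (i + 1)

/-- The sum of the `m` largest parts of `p`. -/
def topSum (p : Multiset ℕ) (m : ℕ) : ℕ :=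
  ∑ i ∈ Finset.Icc 1 p.sum, min m (sCount p i)

/-- Dominance order: `domLE p q` means `p ≤ q`. -/
def domLE (p q : Multiset ℕ) : Prop := ∀ m, topSum p m ≤ topSum q m

/-- `p` is a partition of `N`: all parts positive, summing to `N`. -/
def IsPartitionOf (p : Multiset ℕ) (N : ℕ) : Prop := (∀ a ∈ p, 0 < a) ∧ p.sum = N

/-- Symplectic partition: every odd part occurs with even multiplicity. -/
def IsSymplectic (p : Multiset ℕ) : Prop := ∀ a, a % 2 = 1 → Even (p.count a)

/-- Orthogonal partition: every even part occurs with even multiplicity. -/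
def IsOrthogonal (p : Multiset ℕ) : Prop := ∀ a, a % 2 = 0 → Even (p.count a)

/-- `p^-`: decrease the smallest part by one (deleting it if it becomes `0`). -/
noncomputable def pMinus (p : Multiset ℕ) : Multiset ℕ :=
  if minPart p ≤ 1 then p.erase (minPart p)
  else (minPart p - 1) ::ₘ p.erase (minPart p)

/-- `p^+`: increase the largest part by one. -/
def pPlus (p : Multiset ℕ) : Multiset ℕ := (maxPart p + 1) ::ₘ p.erase (maxPart p)

/-- `p^{+-}`: increase the largest part by one and decrease the smallest by one. -/
noncomputable def pPM (p : Multiset ℕ) : Multiset ℕ := pMinus (pPlus p)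

/-- `p₁ = [⌊b_1/2⌋^{a_1} ⋯ ⌊b_r/2⌋^{a_r}]^t` (discarding zero entries before transposing). -/
def pOne (p : Multiset ℕ) : Multiset ℕ :=
  transpose ((p.map fun b => b / 2).filter fun x => 0 < x)

/-- `Σ_{i : b_i odd} a_i`: the number of odd parts of `p`. -/
def oddMult (p : Multiset ℕ) : ℕ := (p.filter fun a => a % 2 = 1).card

/-- `n* = ⌊(Σ_{i : b_i odd} a_i)/2⌋`. -/
def nStar (p : Multiset ℕ) : ℕ := oddMult p / 2

/-- Append an extra part `m` to `q`, omitted if `m = 0`. -/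
def addPart (m : ℕ) (q : Multiset ℕ) : Multiset ℕ := if m = 0 then q else m ::ₘ q

/-- `c` is the `Sp`-collapse of `p`: the maximal symplectic partition `≤ p` in dominance. -/
def IsSpCollapse (p c : Multiset ℕ) : Prop :=
  IsPartitionOf c p.sum ∧ IsSymplectic c ∧ domLE c p ∧
    ∀ c', IsPartitionOf c' p.sum → IsSymplectic c' → domLE c' p → domLE c' c

/-- `c` is the `SO`-collapse of `p`: the maximal orthogonal partition `≤ p` in dominance. -/
def IsSOCollapse (p c : Multiset ℕ) : Prop :=
  IsPartitionOf c p.sum ∧ IsOrthogonal c ∧ domLE c p ∧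
    ∀ c', IsPartitionOf c' p.sum → IsOrthogonal c' → domLE c' p → domLE c' c

/-- `e` is the `Sp`-expansion of `p`: the minimal special symplectic partition `≥ p`. -/
def IsSpExpansion (p e : Multiset ℕ) : Prop :=
  IsPartitionOf e p.sum ∧ IsSymplectic e ∧ IsSymplectic (transpose e) ∧ domLE p e ∧
    ∀ e', IsPartitionOf e' p.sum → IsSymplectic e' → IsSymplectic (transpose e') →
      domLE p e' → domLE e e'

/-- `e` is the `SO_{2n+1}`-expansion of `p`: the minimal special orthogonal partition `≥ p`
(odd case: special means the transpose is orthogonal). -/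
def IsSOOddExpansion (p e : Multiset ℕ) : Prop :=
  IsPartitionOf e p.sum ∧ IsOrthogonal e ∧ IsOrthogonal (transpose e) ∧ domLE p e ∧
    ∀ e', IsPartitionOf e' p.sum → IsOrthogonal e' → IsOrthogonal (transpose e') →
      domLE p e' → domLE e e'

/-- `e` is the `SO_{2n}`-expansion of `p`: the minimal special orthogonal partition `≥ p`
(even case: special means the transpose is symplectic). -/
def IsSOEvenExpansion (p e : Multiset ℕ) : Prop :=
  IsPartitionOf e p.sum ∧ IsOrthogonal e ∧ IsSymplectic (transpose e) ∧ domLE p e ∧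
    ∀ e', IsPartitionOf e' p.sum → IsOrthogonal e' → IsSymplectic (transpose e') →
      domLE p e' → domLE e e'

/-- `dim_C(q)` for a symplectic partition `q` of `2k`:
`2k² + k − (1/2)Σ s_i(q)² − (1/2)Σ_{i odd} r_i(q)` (note `2k² + k = (|q|² + |q|)/2`). -/
def dimC (p : Multiset ℕ) : ℚ :=
  ((p.sum : ℚ) ^ 2 + (p.sum : ℚ)) / 2
    - (∑ i ∈ Finset.Icc 1 p.sum, (sCount p i : ℚ) ^ 2) / 2
    - (∑ i ∈ Finset.Icc 1 p.sum, if i % 2 = 1 then (rCount p i : ℚ) else 0) / 2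

/-- `dim_B(q)` for an orthogonal partition `q` of `2k+1`:
`2k² + k − (1/2)Σ s_i(q)² + (1/2)Σ_{i odd} r_i(q)` (note `2k² + k = (|q|² − |q|)/2`). -/
def dimB (p : Multiset ℕ) : ℚ :=
  ((p.sum : ℚ) ^ 2 - (p.sum : ℚ)) / 2
    - (∑ i ∈ Finset.Icc 1 p.sum, (sCount p i : ℚ) ^ 2) / 2
    + (∑ i ∈ Finset.Icc 1 p.sum, if i % 2 = 1 then (rCount p i : ℚ) else 0) / 2

/-- `dim_D(q)` for an orthogonal partition `q` of `2k`:
`2k² − k − (1/2)Σ s_i(q)² + (1/2)Σ_{i odd} r_i(q)` (note `2k² − k = (|q|² − |q|)/2`). -/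
def dimD (p : Multiset ℕ) : ℚ :=
  ((p.sum : ℚ) ^ 2 - (p.sum : ℚ)) / 2
    - (∑ i ∈ Finset.Icc 1 p.sum, (sCount p i : ℚ) ^ 2) / 2
    + (∑ i ∈ Finset.Icc 1 p.sum, if i % 2 = 1 then (rCount p i : ℚ) else 0) / 2


def colSum (q : Multiset ℕ) (v : ℕ) : ℕ := ∑ i ∈ Finset.Icc 1 v, sCount q i

def FC (q : Multiset ℕ) (m : ℕ) : ℕ :=
  ((Finset.Icc 1 q.sum).filter (fun i => m ≤ sCount q i)).card

lemma sCount_anti (q : Multiset ℕ) {i j : ℕ} (h : i ≤ j) : sCount q j ≤ sCount q i := by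
  apply Multiset.card_le_card
  apply Multiset.monotone_filter_right
  intro a ha; exact le_trans h ha

lemma mem_le_sum {q : Multiset ℕ} {a : ℕ} (h : a ∈ q) : a ≤ q.sum :=
  Multiset.single_le_sum (fun x _ => Nat.zero_le x) a h

lemma sCount_le_card (q : Multiset ℕ) (i : ℕ) : sCount q i ≤ Multiset.card q :=
  Multiset.card_le_card (Multiset.filter_le _ q)

lemma sCount_eq_zero {q : Multiset ℕ} {i : ℕ} (h : q.sum < i) : sCount q i = 0 := by
  rw [sCount, Multiset.card_eq_zero, Multiset.filter_eq_nil]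
  intro a ha hia
  exact absurd (le_trans hia (mem_le_sum ha)) (by omega)

lemma sCount_one {q : Multiset ℕ} (hpos : ∀ a ∈ q, 0 < a) :
    sCount q 1 = Multiset.card q := by
  rw [sCount]
  have h : Multiset.filter (fun a => 1 ≤ a) q = q :=
    Multiset.filter_eq_self.mpr (fun a ha => hpos a ha)
  rw [h]

lemma sum_indic (v a : ℕ) :
    (∑ i ∈ Finset.Icc 1 v, if i ≤ a then 1 else 0) = min a v := by
  rw [← Finset.card_filter]
  have : (Finset.Icc 1 v).filter (fun i => i ≤ a) = Finset.Icc 1 (min a v) := by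
    ext i; simp [Finset.mem_Icc, Finset.mem_filter]; omega
  rw [this, Nat.card_Icc]; omega

lemma sCount_cons (b : ℕ) (q : Multiset ℕ) (i : ℕ) :
    sCount (b ::ₘ q) i = (if i ≤ b then 1 else 0) + sCount q i := by
  rw [sCount, sCount, Multiset.filter_cons]
  split <;> simp [Nat.add_comm]

lemma sCount_add (q r : Multiset ℕ) (i : ℕ) :
    sCount (q + r) i = sCount q i + sCount r i := by
  rw [sCount, sCount, sCount, Multiset.filter_add, Multiset.card_add]

lemma colSum_eq_sum_map (q : Multiset ℕ) (v : ℕ) :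
    colSum q v = (q.map (fun a => min a v)).sum := by
  induction q using Multiset.induction with
  | empty => simp [colSum, sCount]
  | cons b q ih =>
      simp only [colSum, sCount_cons, Finset.sum_add_distrib, Multiset.map_cons,
        Multiset.sum_cons]
      rw [sum_indic]
      rw [colSum] at ih; omega

lemma colSum_stab {q : Multiset ℕ} {v : ℕ} (h : q.sum ≤ v) : colSum q v = q.sum := by
  rw [colSum_eq_sum_map]
  have : q.map (fun a => min a v) = q.map id := by
    apply Multiset.map_congr rfl
    intro a ha; simp [min_eq_left (le_trans (mem_le_sum ha) h)]
  rw [this, Multiset.map_id]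

lemma colSum_self (q : Multiset ℕ) : colSum q q.sum = q.sum := colSum_stab le_rfl

lemma colSum_succ (q : Multiset ℕ) (v : ℕ) :
    colSum q (v + 1) = colSum q v + sCount q (v + 1) := by
  rw [colSum, colSum, Finset.sum_Icc_succ_top (by omega)]

lemma topSum_zero (q : Multiset ℕ) : topSum q 0 = 0 := by simp [topSum]

lemma topSum_succ (q : Multiset ℕ) (m : ℕ) :
    topSum q (m + 1) = topSum q m + FC q (m + 1) := by
  rw [topSum, topSum, FC, Finset.card_filter, ← Finset.sum_add_distrib]
  apply Finset.sum_congr rfl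
  intro i _
  split <;> omega

lemma topSum_mono (q : Multiset ℕ) {m m' : ℕ} (h : m ≤ m') :
    topSum q m ≤ topSum q m' := by
  apply Finset.sum_le_sum; intro i _; exact le_min (le_trans (min_le_left _ _) h) (min_le_right _ _)

lemma FC_anti (q : Multiset ℕ) {m m' : ℕ} (h : m ≤ m') : FC q m' ≤ FC q m := by
  apply Finset.card_le_card
  intro x hx
  simp only [Finset.mem_filter] at *
  exact ⟨hx.1, le_trans h hx.2⟩

lemma topSum_concave (q : Multiset ℕ) (m : ℕ) :
    topSum q m + topSum q (m + 2) ≤ 2 * topSum q (m + 1) := by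
  show topSum q m + topSum q (m + 1 + 1) ≤ 2 * topSum q (m + 1)
  have h1 := topSum_succ q m
  have h2 := topSum_succ q (m + 1)
  have h3 := FC_anti q (show m + 1 ≤ m + 1 + 1 by omega)
  omega

lemma topSum_card {q : Multiset ℕ} {m : ℕ} (h : Multiset.card q ≤ m) :
    topSum q m = q.sum := by
  rw [topSum]
  have : ∀ i ∈ Finset.Icc 1 q.sum, min m (sCount q i) = sCount q i := by
    intro i _; exact min_eq_right (le_trans (sCount_le_card q i) h)
  rw [Finset.sum_congr rfl this]
  exact colSum_self q

lemma topSum_le_sum (q : Multiset ℕ) (m : ℕ) : topSum q m ≤ q.sum := by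
  calc topSum q m ≤ ∑ i ∈ Finset.Icc 1 q.sum, sCount q i :=
        Finset.sum_le_sum (fun i _ => min_le_right _ _)
    _ = q.sum := colSum_self q

end JiangWF

namespace JiangWF

/-- a filter of a downward-closed predicate on `Icc 1 N` is an initial segment. -/
lemma filter_initial (N : ℕ) (P : ℕ → Prop) [DecidablePred P]
    (hP : ∀ i j, 1 ≤ i → i ≤ j → P j → P i) :
    (Finset.Icc 1 N).filter P = Finset.Icc 1 (((Finset.Icc 1 N).filter P).card) := by
  set S := (Finset.Icc 1 N).filter P with hS
  have hsub : S ⊆ Finset.Icc 1 N := Finset.filter_subset _ _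
  ext i
  simp only [Finset.mem_Icc]
  constructor
  · intro hi
    have hi1 : 1 ≤ i ∧ i ≤ N := by
      have := hsub hi; simpa [Finset.mem_Icc] using this
    refine ⟨hi1.1, ?_⟩
    have hPi : P i := (Finset.mem_filter.mp hi).2
    have : Finset.Icc 1 i ⊆ S := by
      intro j hj
      simp only [Finset.mem_Icc] at hj
      rw [hS, Finset.mem_filter]
      exact ⟨Finset.mem_Icc.mpr ⟨hj.1, le_trans hj.2 hi1.2⟩, hP j i hj.1 hj.2 hPi⟩
    calc i = (Finset.Icc 1 i).card := by rw [Nat.card_Icc]; omega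
      _ ≤ S.card := Finset.card_le_card this
  · rintro ⟨h1, h2⟩
    have hcard : S.card ≤ N := le_trans (Finset.card_le_card hsub) (by rw [Nat.card_Icc]; omega)
    by_contra hmem
    have hnP : ¬ P i := by
      intro hPi
      exact hmem (Finset.mem_filter.mpr ⟨Finset.mem_Icc.mpr ⟨h1, by omega⟩, hPi⟩)
    have hsub2 : S ⊆ Finset.Icc 1 (i - 1) := by
      intro j hj
      rw [hS, Finset.mem_filter, Finset.mem_Icc] at hj
      refine Finset.mem_Icc.mpr ⟨hj.1.1, ?_⟩
      by_contra hj2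
      exact hnP (hP i j (by omega) (by omega) hj.2)
    have := Finset.card_le_card hsub2
    rw [Nat.card_Icc] at this
    omega

/-- universal inequality `topSum q m + colSum q v ≤ m*v + q.sum`. -/
lemma topSum_colSum_le (q : Multiset ℕ) (m v : ℕ) :
    topSum q m + colSum q v ≤ m * v + q.sum := by
  rcases le_or_gt v q.sum with hv | hv
  · have hsplit : ∑ i ∈ Finset.Icc 1 q.sum, min m (sCount q i)
        = ∑ i ∈ Finset.Ioc 0 v, min m (sCount q i)
          + ∑ i ∈ Finset.Ioc v q.sum, min m (sCount q i) := by
      rw [Finset.sum_Ioc_consecutive _ (Nat.zero_le v) hv, ← Finset.Icc_add_one_left_eq_Ioc, zero_add]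
    have h1 : ∑ i ∈ Finset.Ioc 0 v, min m (sCount q i) ≤ m * v := by
      calc ∑ i ∈ Finset.Ioc 0 v, min m (sCount q i) ≤ ∑ _i ∈ Finset.Ioc 0 v, m :=
            Finset.sum_le_sum (fun i _ => min_le_left _ _)
        _ = m * v := by rw [Finset.sum_const, Nat.card_Ioc, Nat.sub_zero, smul_eq_mul, Nat.mul_comm]
    have h2 : ∑ i ∈ Finset.Ioc v q.sum, min m (sCount q i)
        ≤ ∑ i ∈ Finset.Ioc v q.sum, sCount q i :=
      Finset.sum_le_sum (fun i _ => min_le_right _ _)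
    have h3 : colSum q v + ∑ i ∈ Finset.Ioc v q.sum, sCount q i = q.sum := by
      have : colSum q v = ∑ i ∈ Finset.Ioc 0 v, sCount q i := by
        rw [colSum, ← Finset.Icc_add_one_left_eq_Ioc, zero_add]
      rw [this, Finset.sum_Ioc_consecutive _ (Nat.zero_le v) hv, ← Finset.Icc_add_one_left_eq_Ioc]
      exact colSum_self q
    rw [topSum] at *
    omega
  · have hcs : colSum q v = q.sum := colSum_stab (by omega)
    rcases Nat.eq_zero_or_pos m with hm | hm
    · subst hm; rw [topSum_zero]; omega
    · have := topSum_le_sum q m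
      have : topSum q m ≤ m * v := le_trans this (by
        calc q.sum ≤ v := by omega
          _ ≤ m * v := by nlinarith)
      omega

/-- attainment on the row side. -/
lemma attain_row (q : Multiset ℕ) (m : ℕ) :
    ∃ v, v ≤ q.sum ∧ topSum q m + colSum q v = m * v + q.sum ∧
      (1 ≤ v → m ≤ sCount q v) ∧ (v < q.sum → sCount q (v + 1) < m) := by
  classical
  set S := (Finset.Icc 1 q.sum).filter (fun i => m ≤ sCount q i) with hS
  set v := S.card with hv
  have hinit : S = Finset.Icc 1 v := by
    rw [hv, hS]; exact filter_initial _ _ (fun i j _ hij hj => le_trans hj (sCount_anti q hij))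
  have hvN : v ≤ q.sum := by
    rw [hv]
    exact le_trans (Finset.card_le_card (Finset.filter_subset _ _)) (by rw [Nat.card_Icc]; omega)
  refine ⟨v, hvN, ?_, ?_, ?_⟩
  · -- the equality
    have hsplit := Finset.sum_filter_add_sum_filter_not (Finset.Icc 1 q.sum)
      (fun i => m ≤ sCount q i) (fun i => min m (sCount q i))
    rw [← hS] at hsplit
    have h1 : ∑ i ∈ S, min m (sCount q i) = m * v := by
      rw [Finset.sum_congr rfl (fun i hi => min_eq_left (Finset.mem_filter.mp hi).2),
        Finset.sum_const, hv, smul_eq_mul, Nat.mul_comm]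
    have h2 : ∑ i ∈ (Finset.Icc 1 q.sum).filter (fun i => ¬ m ≤ sCount q i), min m (sCount q i)
        = ∑ i ∈ (Finset.Icc 1 q.sum).filter (fun i => ¬ m ≤ sCount q i), sCount q i := by
      apply Finset.sum_congr rfl
      intro i hi
      exact min_eq_right (le_of_not_ge (Finset.mem_filter.mp hi).2)
    have h3 : ∑ i ∈ S, sCount q i = colSum q v := by
      rw [hinit]; rfl
    have h4 := Finset.sum_filter_add_sum_filter_not (Finset.Icc 1 q.sum)
      (fun i => m ≤ sCount q i) (fun i => sCount q i)
    rw [← hS] at h4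
    have h5 : ∑ i ∈ Finset.Icc 1 q.sum, sCount q i = q.sum := colSum_self q
    rw [topSum]
    omega
  · intro h1
    have : v ∈ S := by rw [hinit]; exact Finset.mem_Icc.mpr ⟨h1, le_rfl⟩
    exact (Finset.mem_filter.mp this).2
  · intro hlt
    by_contra hcon
    have : v + 1 ∈ S := Finset.mem_filter.mpr ⟨Finset.mem_Icc.mpr ⟨by omega, by omega⟩, by omega⟩
    rw [hinit, Finset.mem_Icc] at this
    omega

/-- attainment on the column side. -/
lemma attain_col (q : Multiset ℕ) (v : ℕ) :
    ∃ m, topSum q m + colSum q v = m * v + q.sum := by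
  rcases le_or_gt v q.sum with hv | hv
  · refine ⟨sCount q (v + 1), ?_⟩
    set m := sCount q (v + 1) with hm
    have hsplit : topSum q m = ∑ i ∈ Finset.Ioc 0 v, min m (sCount q i)
          + ∑ i ∈ Finset.Ioc v q.sum, min m (sCount q i) := by
      rw [topSum, Finset.sum_Ioc_consecutive _ (Nat.zero_le v) hv, ← Finset.Icc_add_one_left_eq_Ioc, zero_add]
    have h1 : ∑ i ∈ Finset.Ioc 0 v, min m (sCount q i) = m * v := by
      rw [Finset.sum_congr rfl (fun i hi => min_eq_left
        (hm ▸ sCount_anti q (by simp only [Finset.mem_Ioc] at hi; omega))),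
        Finset.sum_const, Nat.card_Ioc, Nat.sub_zero, smul_eq_mul, Nat.mul_comm]
    have h2 : ∑ i ∈ Finset.Ioc v q.sum, min m (sCount q i)
        = ∑ i ∈ Finset.Ioc v q.sum, sCount q i := by
      apply Finset.sum_congr rfl
      intro i hi
      exact min_eq_right (hm ▸ sCount_anti q (by simp only [Finset.mem_Ioc] at hi; omega))
    have h3 : colSum q v + ∑ i ∈ Finset.Ioc v q.sum, sCount q i = q.sum := by
      have hcv : colSum q v = ∑ i ∈ Finset.Ioc 0 v, sCount q i := by
        rw [colSum, ← Finset.Icc_add_one_left_eq_Ioc, zero_add]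
      rw [hcv, Finset.sum_Ioc_consecutive _ (Nat.zero_le v) hv, ← Finset.Icc_add_one_left_eq_Ioc]
      exact colSum_self q
    omega
  · exact ⟨0, by rw [topSum_zero, colSum_stab (by omega)]; omega⟩

/-- transfer: dominance implies reverse pointwise colSum comparison. -/
lemma dom_to_col {a b : Multiset ℕ} (hsum : a.sum = b.sum)
    (hab : ∀ m, topSum a m ≤ topSum b m) : ∀ v, colSum b v ≤ colSum a v := by
  intro v
  obtain ⟨m, hm⟩ := attain_col a v
  have h1 := topSum_colSum_le b m v
  have h2 := hab m
  omega

lemma col_to_dom {a b : Multiset ℕ} (hsum : a.sum = b.sum)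
    (h : ∀ v, colSum b v ≤ colSum a v) : ∀ m, topSum a m ≤ topSum b m := by
  intro m
  obtain ⟨v, _, hv, _, _⟩ := attain_row b m
  have h1 := topSum_colSum_le a m v
  have h2 := h v
  omega

lemma count_add_sCount (q : Multiset ℕ) (j : ℕ) :
    q.count j + sCount q (j + 1) = sCount q j := by
  induction q using Multiset.induction with
  | empty => simp [sCount]
  | cons b t ih =>
      rw [sCount_cons, sCount_cons, Multiset.count_cons]
      split_ifs <;> omega

end JiangWF

namespace JiangWF


lemma FC_eq_of_topSum_eq {a b : Multiset ℕ} (h : ∀ m, topSum a m = topSum b m) :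
    ∀ m, 1 ≤ m → FC a m = FC b m := by
  intro m hm
  obtain ⟨m', rfl⟩ : ∃ m', m = m' + 1 := ⟨m - 1, by omega⟩
  have e1 := topSum_succ a m'
  have e2 := topSum_succ b m'
  have h1 := h m'
  have h2 := h (m' + 1)
  omega

lemma sCount_iff_FC {q : Multiset ℕ} {i m : ℕ} (hi : 1 ≤ i) (hiN : i ≤ q.sum) (hm : 1 ≤ m) :
    m ≤ sCount q i ↔ i ≤ FC q m := by
  classical
  have hinit := filter_initial q.sum (fun j => m ≤ sCount q j)
    (fun i j _ hij hj => le_trans hj (sCount_anti q hij))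
  constructor
  · intro h
    have : i ∈ (Finset.Icc 1 q.sum).filter (fun j => m ≤ sCount q j) :=
      Finset.mem_filter.mpr ⟨Finset.mem_Icc.mpr ⟨hi, hiN⟩, h⟩
    rw [hinit, Finset.mem_Icc] at this
    exact this.2
  · intro h
    have : i ∈ (Finset.Icc 1 q.sum).filter (fun j => m ≤ sCount q j) := by
      rw [hinit, Finset.mem_Icc]; exact ⟨hi, h⟩
    exact (Finset.mem_filter.mp this).2

lemma sCount_le_of_FC {a b : Multiset ℕ} (hsum : a.sum = b.sum)
    (h : ∀ m, 1 ≤ m → FC a m = FC b m) {i : ℕ} (hi : 1 ≤ i) : sCount a i ≤ sCount b i := by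
  rcases le_or_gt i a.sum with hiN | hiN
  · set m := sCount a i with hm
    rcases Nat.eq_zero_or_pos m with h0 | h0
    · omega
    · have h1 : i ≤ FC a m := (sCount_iff_FC hi hiN h0).mp le_rfl
      rw [h m h0] at h1
      exact (sCount_iff_FC hi (by omega) h0).mpr h1
  · rw [sCount_eq_zero hiN]; omega

lemma dom_antisymm {N : ℕ} {a b : Multiset ℕ} (ha : IsPartitionOf a N) (hb : IsPartitionOf b N)
    (h1 : domLE a b) (h2 : domLE b a) : a = b := by
  have hsum : a.sum = b.sum := ha.2.trans hb.2.symm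
  have htop : ∀ m, topSum a m = topSum b m := fun m => le_antisymm (h1 m) (h2 m)
  have hFC := FC_eq_of_topSum_eq htop
  have hFC' : ∀ m, 1 ≤ m → FC b m = FC a m := fun m hm => (hFC m hm).symm
  have hsc : ∀ i, 1 ≤ i → sCount a i = sCount b i := fun i hi =>
    le_antisymm (sCount_le_of_FC hsum hFC hi) (sCount_le_of_FC hsum.symm hFC' hi)
  apply Multiset.ext.mpr
  intro j
  rcases Nat.eq_zero_or_pos j with rfl | hj
  · rw [Multiset.count_eq_zero_of_notMem, Multiset.count_eq_zero_of_notMem]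
    · intro hmem; exact absurd (hb.1 0 hmem) (by omega)
    · intro hmem; exact absurd (ha.1 0 hmem) (by omega)
  · have e1 := count_add_sCount a j
    have e2 := count_add_sCount b j
    have e3 := hsc j hj
    have e4 := hsc (j + 1) (by omega)
    omega

lemma maxPart_le_sum (q : Multiset ℕ) : maxPart q ≤ q.sum :=
  Multiset.sup_le.mpr (fun b hb => mem_le_sum hb)

lemma sCount_gt_maxPart {q : Multiset ℕ} {i : ℕ} (h : maxPart q < i) : sCount q i = 0 := by
  rw [sCount, Multiset.card_eq_zero, Multiset.filter_eq_nil]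
  intro a ha hia
  have := Multiset.le_sup ha
  rw [maxPart] at h
  omega

lemma card_filter_range_shift (M : ℕ) (P : ℕ → Prop) [DecidablePred P] :
    ((Finset.range M).filter (fun j => P (j + 1))).card = ((Finset.Icc 1 M).filter P).card := by
  apply Finset.card_bij (fun j _ => j + 1)
  · intro a ha
    simp only [Finset.mem_filter, Finset.mem_range] at ha
    simp only [Finset.mem_filter, Finset.mem_Icc]
    exact ⟨⟨by omega, by omega⟩, ha.2⟩
  · intro a ha b hb hab; omega
  · intro b hb
    simp only [Finset.mem_filter, Finset.mem_Icc] at hb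
    refine ⟨b - 1, ?_, by omega⟩
    simp only [Finset.mem_filter, Finset.mem_range]
    constructor
    · omega
    · have : b - 1 + 1 = b := by omega
      rw [this]; exact hb.2

lemma filter_Icc_pad {M N : ℕ} (P : ℕ → Prop) [DecidablePred P] (hMN : M ≤ N)
    (h : ∀ i, M < i → ¬ P i) :
    (Finset.Icc 1 N).filter P = (Finset.Icc 1 M).filter P := by
  ext i
  simp only [Finset.mem_filter, Finset.mem_Icc]
  constructor
  · rintro ⟨⟨h1, h2⟩, h3⟩
    refine ⟨⟨h1, ?_⟩, h3⟩
    by_contra hc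
    exact h i (by omega) h3
  · rintro ⟨⟨h1, h2⟩, h3⟩
    exact ⟨⟨h1, by omega⟩, h3⟩

lemma sCount_transpose (q : Multiset ℕ) {i : ℕ} (hi : 1 ≤ i) :
    sCount (transpose q) i = FC q i := by
  classical
  rw [sCount, transpose, Multiset.filter_map, Multiset.card_map]
  have h1 : Multiset.card (Multiset.filter ((fun a => i ≤ a) ∘ fun j => sCount q (j + 1))
      (Multiset.range (maxPart q)))
      = ((Finset.range (maxPart q)).filter (fun j => i ≤ sCount q (j + 1))).card := by
    rfl
  rw [h1, card_filter_range_shift (maxPart q) (fun j => i ≤ sCount q j), FC,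
    filter_Icc_pad _ (maxPart_le_sum q)]
  intro j hj
  rw [sCount_gt_maxPart hj]
  omega

lemma transpose_sum (q : Multiset ℕ) : (transpose q).sum = q.sum := by
  have h0 : (transpose q).sum = ∑ j ∈ Finset.range (maxPart q), sCount q (j + 1) := by
    rw [transpose]; rfl
  rw [h0]
  have h1 : ∑ j ∈ Finset.range (maxPart q), sCount q (j + 1) = colSum q (maxPart q) := by
    rw [colSum]
    induction (maxPart q) with
    | zero => simp
    | succ M ih => rw [Finset.sum_range_succ, ih, Finset.sum_Icc_succ_top (by omega)]
  rw [h1, colSum_eq_sum_map]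
  have : q.map (fun a => min a (maxPart q)) = q.map id := by
    apply Multiset.map_congr rfl
    intro a ha
    have : a ≤ maxPart q := Multiset.le_sup ha
    simp [min_eq_left this]
  rw [this, Multiset.map_id]

lemma transpose_pos {q : Multiset ℕ} : ∀ a ∈ transpose q, 0 < a := by
  intro a ha
  rw [transpose] at ha
  obtain ⟨j, hj, rfl⟩ := Multiset.mem_map.mp ha
  rw [Multiset.mem_range] at hj
  rw [sCount, Multiset.card_pos]
  intro hnil
  rw [Multiset.filter_eq_nil] at hnil
  have : maxPart q ≤ j := Multiset.sup_le.mpr (fun b hb => by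
    have := hnil b hb; omega)
  omega

lemma colSum_transpose (q : Multiset ℕ) (v : ℕ) : colSum (transpose q) v = topSum q v := by
  induction v with
  | zero => simp [colSum, topSum_zero]
  | succ v ih => rw [colSum_succ, ih, sCount_transpose q (by omega), topSum_succ]

end JiangWF

namespace JiangWF

lemma orth_colSum_even {q : Multiset ℕ} (horth : IsOrthogonal q) (hE : Even q.sum) :
    ∀ v, v % 2 = 1 → Even (colSum q v) := by
  suffices h : ∀ j v, v % 2 = 1 → (colSum q v) % 2 = (colSum q (v + 2 * j)) % 2 by
    intro v hv
    have h1 := h q.sum v hv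
    have hstab : colSum q (v + 2 * q.sum) = q.sum := colSum_stab (by omega)
    rw [Nat.even_iff] at hE ⊢
    omega
  intro j
  induction j with
  | zero => simp
  | succ j ih =>
      intro v hv
      have h1 := ih v hv
      have e1 : v + 2 * (j + 1) = v + 2 * j + 1 + 1 := by ring
      have e2 := colSum_succ q (v + 2 * j + 1)
      have e3 := colSum_succ q (v + 2 * j)
      have e4 := count_add_sCount q (v + 2 * j + 1)
      have e5 := horth (v + 2 * j + 1) (by omega)
      rw [Nat.even_iff] at e5
      rw [e1]
      omega

lemma colSum_even_orth {q : Multiset ℕ} (hpos : ∀ a ∈ q, 0 < a)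
    (h : ∀ v, v % 2 = 1 → Even (colSum q v)) : IsOrthogonal q := by
  intro a ha
  rcases Nat.eq_zero_or_pos a with rfl | hpos'
  · rw [Multiset.count_eq_zero_of_notMem]
    · exact Even.zero
    · intro hmem; exact absurd (hpos 0 hmem) (by omega)
  · have ha2 : 2 ≤ a := by omega
    have e1 := count_add_sCount q a
    have c2 := colSum_succ q a
    have c3 : colSum q a = colSum q (a - 1) + sCount q a := by
      have e : a - 1 + 1 = a := by omega
      rw [← e, colSum_succ, e]
    have h1 := h (a + 1) (by omega)
    have h2 := h (a - 1) (by omega)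
    rw [Nat.even_iff] at h1 h2 ⊢
    omega

lemma sympl_transpose_topSum {q : Multiset ℕ} (h : IsSymplectic (transpose q)) :
    ∀ k, Even (topSum q (2 * k)) := by
  intro k
  induction k with
  | zero => simp [topSum_zero]
  | succ k ih =>
      have t1 := topSum_succ q (2 * k)
      have t2 := topSum_succ q (2 * k + 1)
      have e4 := count_add_sCount (transpose q) (2 * k + 1)
      have e5 := sCount_transpose q (show 1 ≤ 2 * k + 1 by omega)
      have e6 := sCount_transpose q (show 1 ≤ 2 * k + 1 + 1 by omega)
      have e7 := h (2 * k + 1) (by omega)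
      have e0 : 2 * (k + 1) = 2 * k + 1 + 1 := by ring
      rw [e0, Nat.even_iff]
      rw [Nat.even_iff] at ih e7
      omega

lemma topSum_even_sympl {q : Multiset ℕ} (h : ∀ k, Even (topSum q (2 * k))) :
    IsSymplectic (transpose q) := by
  intro a ha
  obtain ⟨k, rfl⟩ : ∃ k, a = 2 * k + 1 := ⟨a / 2, by omega⟩
  have e4 := count_add_sCount (transpose q) (2 * k + 1)
  have e5 := sCount_transpose q (show 1 ≤ 2 * k + 1 by omega)
  have e6 := sCount_transpose q (show 1 ≤ 2 * k + 1 + 1 by omega)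
  have t1 := topSum_succ q (2 * k)
  have t2 := topSum_succ q (2 * k + 1)
  have h1 := h k
  have h2 := h (k + 1)
  have e0 : 2 * (k + 1) = 2 * k + 1 + 1 := by ring
  rw [e0] at h2
  rw [Nat.even_iff] at h1 h2 ⊢
  omega

end JiangWF

namespace JiangWF

lemma sum_filter_pos (s : Multiset ℕ) : (s.filter (fun x => 0 < x)).sum = s.sum := by
  conv_rhs => rw [← Multiset.filter_add_not (fun x => 0 < x) s]
  rw [Multiset.sum_add]
  have h : (s.filter (fun x => ¬ 0 < x)).sum = 0 := by
    apply Multiset.sum_eq_zero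
    intro x hx
    have := (Multiset.mem_filter.mp hx).2
    omega
  omega

lemma card_filter_map (f : ℕ → ℕ) (pr : ℕ → Prop) [DecidablePred pr] (s : Multiset ℕ) :
    Multiset.card ((s.map f).filter pr) = Multiset.card (s.filter (fun a => pr (f a))) := by
  induction s using Multiset.induction with
  | empty => simp
  | cons b t ih =>
      rw [Multiset.map_cons, Multiset.filter_cons, Multiset.filter_cons]
      split_ifs <;> simp [ih]

lemma odd_sum_identity (s : Multiset ℕ) (h : ∀ a ∈ s, a % 2 = 1) :
    2 * (s.map (fun b => b / 2)).sum + Multiset.card s = s.sum := by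
  induction s using Multiset.induction with
  | empty => simp
  | cons b t ih =>
      have hb := h b (Multiset.mem_cons_self b t)
      have ht := ih (fun a ha => h a (Multiset.mem_cons_of_mem ha))
      simp only [Multiset.map_cons, Multiset.sum_cons, Multiset.card_cons]
      omega

lemma sum_range_pair (g : ℕ → ℕ) (n : ℕ) :
    ∑ i ∈ Finset.range (2 * n), g i = ∑ j ∈ Finset.range n, (g (2 * j) + g (2 * j + 1)) := by
  induction n with
  | zero => simp
  | succ n ih =>
      have e : 2 * (n + 1) = (2 * n + 1) + 1 := by ring
      rw [e, Finset.sum_range_succ, Finset.sum_range_succ, ih, Finset.sum_range_succ]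
      omega

lemma sum_Icc_one (f : ℕ → ℕ) (K : ℕ) :
    ∑ i ∈ Finset.Icc 1 K, f i = ∑ i ∈ Finset.range K, f (i + 1) := by
  induction K with
  | zero => simp
  | succ K ih => rw [Finset.sum_range_succ, ← ih, Finset.sum_Icc_succ_top (by omega)]

lemma sum_min_pad (q : Multiset ℕ) (v : ℕ) {K K' : ℕ} (hKK' : K ≤ K')
    (hz : ∀ i, K < i → sCount q i = 0) :
    ∑ i ∈ Finset.Icc 1 K', min v (sCount q i) = ∑ i ∈ Finset.Icc 1 K, min v (sCount q i) := by
  have hsplit : ∑ i ∈ Finset.Ioc 0 K', min v (sCount q i)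
      = ∑ i ∈ Finset.Ioc 0 K, min v (sCount q i) + ∑ i ∈ Finset.Ioc K K', min v (sCount q i) :=
    (Finset.sum_Ioc_consecutive _ (Nat.zero_le K) hKK').symm
  have hzero : ∑ i ∈ Finset.Ioc K K', min v (sCount q i) = 0 := by
    apply Finset.sum_eq_zero
    intro i hi
    rw [Finset.mem_Ioc] at hi
    rw [hz i hi.1]
    simp
  have g1 : Finset.Icc 1 K' = Finset.Ioc 0 K' := by rw [← Finset.Icc_add_one_left_eq_Ioc, zero_add]
  have g2 : Finset.Icc 1 K = Finset.Ioc 0 K := by rw [← Finset.Icc_add_one_left_eq_Ioc, zero_add]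
  rw [g1, g2]
  omega

end JiangWF

namespace JiangWF


lemma card_le_sum {s : Multiset ℕ} (h : ∀ a ∈ s, 0 < a) : Multiset.card s ≤ s.sum := by
  induction s using Multiset.induction with
  | empty => simp
  | cons b t ih =>
      have hb := h b (Multiset.mem_cons_self b t)
      have ht := ih (fun a ha => h a (Multiset.mem_cons_of_mem ha))
      simp only [Multiset.card_cons, Multiset.sum_cons]
      omega

/-- the sum `Ap p n v = ∑_{j=0}^{n} min v (sCount p (2j+1))`. -/
def Ap (p : Multiset ℕ) (n v : ℕ) : ℕ :=
  ∑ j ∈ Finset.range (n + 1), min v (sCount p (2 * j + 1))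



def dlt (p : Multiset ℕ) (v : ℕ) : ℕ :=
  if v = 0 ∨ Multiset.card p ≤ v then 0
  else if v % 2 = 1 then 1
  else if FC p v = FC p (v + 1) then 1 else 0

def CQf (p : Multiset ℕ) (v : ℕ) : ℕ := topSum p v + dlt p v
def gQ (p : Multiset ℕ) (v : ℕ) : ℕ := FC p v + dlt p v - dlt p (v - 1)
def QT (p : Multiset ℕ) : Multiset ℕ :=
  (Multiset.range (Multiset.card p)).map (fun j => gQ p (j + 1))
def Qm (p : Multiset ℕ) : Multiset ℕ := transpose (QT p)

lemma dlt_le_one {p : Multiset ℕ} {v : ℕ} : dlt p v ≤ 1 := by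
  rw [dlt]; split_ifs <;> omega

lemma dlt_zero (p : Multiset ℕ) : dlt p 0 = 0 := by
  rw [dlt]; simp

lemma dlt_high {p : Multiset ℕ} {v : ℕ} (h : Multiset.card p ≤ v) : dlt p v = 0 := by
  rw [dlt, if_pos (Or.inr h)]

lemma dlt_odd {p : Multiset ℕ} {v : ℕ} (h1 : v % 2 = 1) (h2 : v < Multiset.card p) :
    dlt p v = 1 := by
  rw [dlt, if_neg (by omega), if_pos h1]

lemma dlt_even_eq {p : Multiset ℕ} {v : ℕ} (h0 : v % 2 = 0) (h1 : 1 ≤ v)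
    (h2 : v < Multiset.card p) (h3 : FC p v = FC p (v + 1)) : dlt p v = 1 := by
  rw [dlt, if_neg (by omega), if_neg (by omega), if_pos h3]

lemma dlt_even_ne {p : Multiset ℕ} {v : ℕ} (h0 : v % 2 = 0) (h3 : FC p v ≠ FC p (v + 1)) :
    dlt p v = 0 := by
  rw [dlt]; split_ifs <;> omega

section Main

variable {n : ℕ} {p : Multiset ℕ}
  (hne : p ≠ 0) (hpos : ∀ a ∈ p, 0 < a) (hsum : p.sum = 2 * n) (hodd : ∀ a ∈ p, a % 2 = 1)

include hpos hsum hodd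

omit hpos hsum in
lemma oddMult_eq : oddMult p = Multiset.card p := by
  rw [oddMult]
  congr 1
  exact Multiset.filter_eq_self.mpr hodd

omit hpos in
lemma kk_even : Multiset.card p % 2 = 0 := by
  have := odd_sum_identity p hodd
  omega

omit hodd in
lemma kk_le : Multiset.card p ≤ 2 * n := by
  have := card_le_sum hpos
  omega

include hne in
omit hpos hsum hodd in
lemma kk_pos : 1 ≤ Multiset.card p := by
  rw [Nat.one_le_iff_ne_zero]
  intro h
  exact hne (Multiset.card_eq_zero.mp h)

include hne in
omit hpos in
lemma kk_two : 2 ≤ Multiset.card p := by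
  have h1 := kk_pos hne
  have h2 := kk_even hsum hodd
  omega

omit hpos in
lemma nstar_eq : 2 * nStar p = Multiset.card p := by
  rw [nStar, oddMult_eq hodd]
  have h2 := kk_even hsum hodd
  omega


omit hpos in
lemma sCount_even_odd : ∀ j, 1 ≤ j → sCount p (2 * j) = sCount p (2 * j + 1) := by
  intro j hj
  rw [sCount, sCount]
  congr 1
  apply Multiset.filter_congr
  intro a ha
  have := hodd a ha
  constructor <;> intro <;> omega

omit hsum hodd in
lemma sCount_p_one : sCount p 1 = Multiset.card p := sCount_one hpos

omit hpos hodd in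
lemma sCount_p_high : ∀ i, 2 * n < i → sCount p i = 0 := by
  intro i hi
  exact sCount_eq_zero (by omega)

lemma topSum_p_pair : ∀ v, topSum p v + min v (Multiset.card p) = 2 * Ap p n v := by
  intro v
  have h0 : topSum p v = ∑ i ∈ Finset.range (2 * n), min v (sCount p (i + 1)) := by
    rw [topSum, hsum, sum_Icc_one]
  have hz1 : sCount p (2 * n + 1) = 0 := sCount_p_high hsum _ (by omega)
  have hz2 : sCount p (2 * n + 1 + 1) = 0 := sCount_p_high hsum _ (by omega)
  have hext : ∑ i ∈ Finset.range (2 * (n + 1)), min v (sCount p (i + 1))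
      = ∑ i ∈ Finset.range (2 * n), min v (sCount p (i + 1)) := by
    have e : 2 * (n + 1) = (2 * n + 1) + 1 := by ring
    rw [e, Finset.sum_range_succ, Finset.sum_range_succ, hz1, hz2]
    simp
  have hpair : ∑ i ∈ Finset.range (2 * (n + 1)), min v (sCount p (i + 1))
      = ∑ j ∈ Finset.range (n + 1),
          (min v (sCount p (2 * j + 1)) + min v (sCount p (2 * j + 1 + 1))) := by
    rw [sum_range_pair (fun i => min v (sCount p (i + 1))) (n + 1)]
  have hsplitsum : ∑ j ∈ Finset.range (n + 1),
        (min v (sCount p (2 * j + 1)) + min v (sCount p (2 * j + 1 + 1)))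
      = Ap p n v + ∑ j ∈ Finset.range (n + 1), min v (sCount p (2 * (j + 1) + 1)) := by
    rw [Finset.sum_add_distrib]
    congr 1
    apply Finset.sum_congr rfl
    intro j _
    have hjj := sCount_even_odd hsum hodd (j + 1) (by omega)
    have e : 2 * j + 1 + 1 = 2 * (j + 1) := by ring
    rw [e, hjj]
  have h1 := Finset.sum_range_succ' (fun j => min v (sCount p (2 * j + 1))) (n + 1)
  have h2 := Finset.sum_range_succ (fun j => min v (sCount p (2 * j + 1))) (n + 1)
  have e0 : 2 * 0 + 1 = 1 := by norm_num
  rw [e0] at h1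
  have hz3 : sCount p (2 * (n + 1) + 1) = 0 := sCount_p_high hsum _ (by omega)
  rw [hz3] at h2
  have hone := sCount_p_one hpos
  have hApdef : Ap p n v = ∑ j ∈ Finset.range (n + 1), min v (sCount p (2 * j + 1)) := rfl
  rw [← hone]
  omega

lemma topSum_p_mod : ∀ v, (topSum p v + min v (Multiset.card p)) % 2 = 0 := by
  intro v
  have := topSum_p_pair hpos hsum hodd v
  omega

omit hpos hodd in
lemma topSum_p_stab : ∀ v, Multiset.card p ≤ v → topSum p v = 2 * n := by
  intro v hv
  rw [topSum_card hv, hsum]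

lemma Fp_odd : ∀ v, 1 ≤ v → v ≤ Multiset.card p → FC p v % 2 = 1 := by
  intro v hv1 hv2
  obtain ⟨u, rfl⟩ : ∃ u, v = u + 1 := ⟨v - 1, by omega⟩
  have t1 := topSum_succ p u
  have m1 := topSum_p_mod hpos hsum hodd u
  have m2 := topSum_p_mod hpos hsum hodd (u + 1)
  have e1 : min u (Multiset.card p) = u := by omega
  have e2 : min (u + 1) (Multiset.card p) = u + 1 := by omega
  omega

omit hpos hsum hodd in
lemma Fp_zero : ∀ v, Multiset.card p < v → FC p v = 0 := by
  intro v hv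
  rw [FC, Finset.card_eq_zero, Finset.filter_eq_empty_iff]
  intro i _
  have := sCount_le_card p i
  omega

omit hpos hsum in
lemma sCount_h : ∀ j, 1 ≤ j →
    sCount ((p.map fun b => b / 2).filter fun x => 0 < x) j = sCount p (2 * j + 1) := by
  intro j hj
  rw [sCount, Multiset.filter_filter]
  have h1 : Multiset.filter (fun a => j ≤ a ∧ 0 < a) (p.map fun b => b / 2)
      = Multiset.filter (fun a => j ≤ a) (p.map fun b => b / 2) := by
    apply Multiset.filter_congr
    intro a _
    constructor
    · intro h; exact h.1
    · intro h; exact ⟨h, by omega⟩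
  rw [h1, card_filter_map]
  rw [sCount]
  congr 1
  apply Multiset.filter_congr
  intro a ha
  have := hodd a ha
  constructor <;> intro <;> omega

omit hpos in
lemma sCount_h_high : ∀ i, n ≤ i → 1 ≤ i →
    sCount ((p.map fun b => b / 2).filter fun x => 0 < x) i = 0 := by
  intro i h1 h2
  rw [sCount_h hodd i h2]
  exact sCount_eq_zero (by omega)

omit hpos hsum in
lemma pOne_def : pOne p = transpose ((p.map fun b => b / 2).filter fun x => 0 < x) := rfl

omit hpos in
lemma hH_sum : 2 * ((p.map fun b => b / 2).filter fun x => 0 < x).sum + Multiset.card p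
    = 2 * n := by
  rw [sum_filter_pos]
  rw [odd_sum_identity p hodd, hsum]

lemma colSum_D : ∀ v, colSum (pOne p) v + min v (Multiset.card p) = Ap p n v := by
  intro v
  set hH := (p.map fun b => b / 2).filter fun x => 0 < x with hhH
  have h0 : colSum (pOne p) v = topSum hH v := colSum_transpose hH v
  have hzz : ∀ i, n < i → sCount hH i = 0 := by
    intro i hi
    rcases Nat.eq_zero_or_pos i with rfl | hipos
    · omega
    · exact sCount_h_high hsum hodd i (by omega) hipos
  have hz2 : ∀ i, hH.sum < i → sCount hH i = 0 := fun i hi => sCount_eq_zero hi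
  have hpad : topSum hH v = ∑ i ∈ Finset.Icc 1 n, min v (sCount hH i) := by
    rw [topSum]
    rcases le_total hH.sum n with h | h
    · exact (sum_min_pad hH v h hz2).symm
    · exact sum_min_pad hH v h hzz
  have hcongr : ∑ i ∈ Finset.Icc 1 n, min v (sCount hH i)
      = ∑ i ∈ Finset.Icc 1 n, min v (sCount p (2 * i + 1)) := by
    apply Finset.sum_congr rfl
    intro i hi
    rw [Finset.mem_Icc] at hi
    rw [sCount_h hodd i hi.1]
  have hrange : ∑ i ∈ Finset.Icc 1 n, min v (sCount p (2 * i + 1))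
      = ∑ i ∈ Finset.range n, min v (sCount p (2 * (i + 1) + 1)) := by
    rw [sum_Icc_one]
  have h1 := Finset.sum_range_succ' (fun j => min v (sCount p (2 * j + 1))) n
  have e0 : 2 * 0 + 1 = 1 := by norm_num
  rw [e0] at h1
  have hone := sCount_p_one hpos
  have hApdef : Ap p n v = ∑ j ∈ Finset.range (n + 1), min v (sCount p (2 * j + 1)) := rfl
  have hAp2 : Ap p n v = (∑ i ∈ Finset.range n, min v (sCount p (2 * (i + 1) + 1)))
      + min v (Multiset.card p) := by
    rw [hApdef, h1, hone]
  rw [h0, hpad, hcongr, hrange, hAp2]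

include hne in
omit hpos in
lemma Pm_cons : addPart (2 * nStar p - 1) ((1 : ℕ) ::ₘ (pOne p + pOne p))
    = (Multiset.card p - 1) ::ₘ ((1 : ℕ) ::ₘ (pOne p + pOne p)) := by
  have h1 := nstar_eq hsum hodd
  have h2 := kk_two hne hsum hodd
  rw [addPart, if_neg (by omega)]
  congr 1
  omega

include hne in
omit hpos in
lemma sCount_Pm : ∀ i, sCount (addPart (2 * nStar p - 1) ((1 : ℕ) ::ₘ (pOne p + pOne p))) i
    = (if i ≤ Multiset.card p - 1 then 1 else 0)
      + ((if i ≤ 1 then 1 else 0) + (sCount (pOne p) i + sCount (pOne p) i)) := by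
  intro i
  rw [Pm_cons hne hsum hodd, sCount_cons, sCount_cons, sCount_add]

include hne in
omit hpos in
lemma colSum_Pm : ∀ v, colSum (addPart (2 * nStar p - 1) ((1 : ℕ) ::ₘ (pOne p + pOne p))) v
    = min (Multiset.card p - 1) v + (min 1 v + 2 * colSum (pOne p) v) := by
  intro v
  rw [colSum]
  rw [Finset.sum_congr rfl (fun i _ => sCount_Pm hne hsum hodd i)]
  rw [Finset.sum_add_distrib, Finset.sum_add_distrib, Finset.sum_add_distrib]
  rw [sum_indic, sum_indic]
  rw [colSum]
  omega

include hne in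
lemma colSum_Pm_eq : ∀ v, colSum (addPart (2 * nStar p - 1) ((1 : ℕ) ::ₘ (pOne p + pOne p))) v
    = topSum p v + (if 1 ≤ v ∧ v < Multiset.card p then 1 else 0) := by
  intro v
  have h1 := colSum_Pm hne hsum hodd v
  have h2 := colSum_D hpos hsum hodd v
  have h3 := topSum_p_pair hpos hsum hodd v
  have h4 := kk_two hne hsum hodd
  split_ifs <;> omega

include hne in
omit hpos in
lemma Pm_sum : (addPart (2 * nStar p - 1) ((1 : ℕ) ::ₘ (pOne p + pOne p))).sum = 2 * n := by
  rw [Pm_cons hne hsum hodd]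
  rw [Multiset.sum_cons, Multiset.sum_cons, Multiset.sum_add]
  have h1 : (pOne p).sum = ((p.map fun b => b / 2).filter fun x => 0 < x).sum :=
    transpose_sum _
  have h2 := hH_sum hsum hodd
  have h3 := kk_two hne hsum hodd
  omega

include hne in
omit hpos in
lemma Pm_pos : ∀ a ∈ addPart (2 * nStar p - 1) ((1 : ℕ) ::ₘ (pOne p + pOne p)), 0 < a := by
  rw [Pm_cons hne hsum hodd]
  intro a ha
  have h3 := kk_two hne hsum hodd
  rcases Multiset.mem_cons.mp ha with rfl | ha2
  · omega
  rcases Multiset.mem_cons.mp ha2 with rfl | ha3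
  · omega
  rcases Multiset.mem_add.mp ha3 with h | h <;>
  · rw [pOne_def hodd] at h
    exact transpose_pos a h

lemma gq_add : ∀ v, gQ p (v + 1) + dlt p v = FC p (v + 1) + dlt p (v + 1) := by
  intro v
  have hsubst : v + 1 - 1 = v := by omega
  rw [gQ, hsubst]
  rcases le_or_gt (v + 1) (Multiset.card p) with h | h
  · have := Fp_odd hpos hsum hodd (v + 1) (by omega) h
    have := @dlt_le_one p v
    omega
  · have h1 : dlt p v = 0 := dlt_high (by omega)
    omega

lemma CQ_tele : ∀ v, CQf p (v + 1) = CQf p v + gQ p (v + 1) := by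
  intro v
  have h1 := topSum_succ p v
  have h2 := gq_add hpos hsum hodd v
  rw [CQf, CQf]
  omega

lemma gQ_anti : ∀ v, 1 ≤ v → gQ p (v + 1) ≤ gQ p v := by
  intro v hv
  have hFa : FC p (v + 1) ≤ FC p v := FC_anti p (by omega)
  have d1 : dlt p v ≤ 1 := dlt_le_one
  have d0 : dlt p (v - 1) ≤ 1 := dlt_le_one
  have d2 : dlt p (v + 1) ≤ 1 := dlt_le_one
  have hsubst : v + 1 - 1 = v := by omega
  rcases le_or_gt (Multiset.card p) v with hkv | hkv
  · have hz : FC p (v + 1) = 0 := Fp_zero _ (by omega)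
    have hg : gQ p (v + 1) = 0 := by
      rw [gQ, hsubst, dlt_high (by omega : Multiset.card p ≤ v + 1)]
      omega
    omega
  · have hke := kk_even hsum hodd
    have ho1 := Fp_odd hpos hsum hodd v (by omega) (by omega)
    rcases Nat.lt_or_ge (v + 1) (Multiset.card p) with hk1 | hk1
    · have ho2 := Fp_odd hpos hsum hodd (v + 1) (by omega) (by omega)
      rcases Nat.even_or_odd v with hev | hodd'
      · have hv2 : v % 2 = 0 := by rcases hev with ⟨t, ht⟩; omega
        have hd0 : dlt p (v - 1) = 1 := dlt_odd (by omega) (by omega)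
        have hd2 : dlt p (v + 1) = 1 := dlt_odd (by omega) (by omega)
        by_cases heq : FC p v = FC p (v + 1)
        · have hdv : dlt p v = 1 := dlt_even_eq hv2 (by omega) (by omega) heq
          rw [gQ, gQ, hsubst, hdv, hd2, hd0]
          omega
        · have hdv : dlt p v = 0 := dlt_even_ne hv2 heq
          rw [gQ, gQ, hsubst, hdv, hd2, hd0]
          omega
      · have hv2 : v % 2 = 1 := by rcases hodd' with ⟨t, ht⟩; omega
        have hdv : dlt p v = 1 := dlt_odd hv2 (by omega)
        rw [gQ, gQ, hsubst, hdv]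
        omega
    · have hvk : v + 1 = Multiset.card p := by omega
      have hv2 : v % 2 = 1 := by omega
      have hdv : dlt p v = 1 := dlt_odd hv2 (by omega)
      have hdk : dlt p (v + 1) = 0 := dlt_high (by omega)
      have ho2 := Fp_odd hpos hsum hodd (v + 1) (by omega) (by omega)
      rw [gQ, gQ, hsubst, hdv, hdk]
      omega

lemma gQ_anti_le : ∀ v w, 1 ≤ v → v ≤ w → gQ p w ≤ gQ p v := by
  intro v w hv hvw
  induction w, hvw using Nat.le_induction with
  | base => exact le_rfl
  | succ w hw ih => exact le_trans (gQ_anti hpos hsum hodd w (by omega)) ih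

omit hpos hsum hodd in
lemma sCount_QT : ∀ j, sCount (QT p) j
    = ((Finset.Icc 1 (Multiset.card p)).filter (fun v => j ≤ gQ p v)).card := by
  intro j
  rw [QT, sCount, card_filter_map]
  have h1 : Multiset.card (Multiset.filter (fun x => j ≤ gQ p (x + 1))
      (Multiset.range (Multiset.card p)))
      = ((Finset.range (Multiset.card p)).filter (fun x => j ≤ gQ p (x + 1))).card := rfl
  rw [h1]
  exact card_filter_range_shift (Multiset.card p) (fun v => j ≤ gQ p v)

omit hpos hsum hodd in
lemma card_QT : Multiset.card (QT p) = Multiset.card p := by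
  rw [QT, Multiset.card_map, Multiset.card_range]

lemma sCount_Qm : ∀ i, 1 ≤ i →
    sCount (Qm p) i = if i ≤ Multiset.card p then gQ p i else 0 := by
  intro i hi
  rw [Qm, sCount_transpose _ hi]
  rcases le_or_gt i (Multiset.card p) with hik | hik
  · rw [if_pos hik]
    have claim1 : ∀ m, 1 ≤ m → (i ≤ sCount (QT p) m ↔ m ≤ gQ p i) := by
      intro m hm
      rw [sCount_QT]
      constructor
      · intro h
        have hinit := filter_initial (Multiset.card p) (fun v => m ≤ gQ p v)
          (fun a b ha hab hb => le_trans hb (gQ_anti_le hpos hsum hodd a b ha hab))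
        have : i ∈ (Finset.Icc 1 (Multiset.card p)).filter (fun v => m ≤ gQ p v) := by
          rw [hinit, Finset.mem_Icc]
          exact ⟨hi, h⟩
        exact (Finset.mem_filter.mp this).2
      · intro h
        have hsub : Finset.Icc 1 i ⊆
            (Finset.Icc 1 (Multiset.card p)).filter (fun v => m ≤ gQ p v) := by
          intro a ha
          rw [Finset.mem_Icc] at ha
          rw [Finset.mem_filter, Finset.mem_Icc]
          exact ⟨⟨ha.1, by omega⟩, le_trans h (gQ_anti_le hpos hsum hodd a i ha.1 ha.2)⟩
        calc i = (Finset.Icc 1 i).card := by rw [Nat.card_Icc]; omega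
          _ ≤ _ := Finset.card_le_card hsub
    have claim2 : gQ p i ≤ (QT p).sum := by
      apply mem_le_sum
      rw [QT]
      apply Multiset.mem_map.mpr
      refine ⟨i - 1, Multiset.mem_range.mpr (by omega), by congr 1; omega⟩
    have h3 : (Finset.Icc 1 (QT p).sum).filter (fun m => i ≤ sCount (QT p) m)
        = (Finset.Icc 1 (QT p).sum).filter (fun m => m ≤ gQ p i) := by
      apply Finset.filter_congr
      intro m hm
      rw [Finset.mem_Icc] at hm
      exact claim1 m hm.1
    have h4 : (Finset.Icc 1 (QT p).sum).filter (fun m => m ≤ gQ p i) = Finset.Icc 1 (gQ p i) := by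
      ext m
      simp only [Finset.mem_filter, Finset.mem_Icc]
      omega
    rw [FC, h3, h4, Nat.card_Icc]
    omega
  · rw [if_neg (by omega)]
    rw [FC, Finset.card_eq_zero, Finset.filter_eq_empty_iff]
    intro m _
    have h1 := sCount_le_card (QT p) m
    rw [card_QT] at h1
    omega

lemma colSum_Qm : ∀ v, colSum (Qm p) v = CQf p v := by
  intro v
  induction v with
  | zero => rw [CQf, topSum_zero, dlt_zero, colSum]; simp
  | succ v ih =>
      rw [colSum_succ, ih, sCount_Qm hpos hsum hodd (v + 1) (by omega)]
      rcases le_or_gt (v + 1) (Multiset.card p) with h | h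
      · rw [if_pos h, CQ_tele hpos hsum hodd]
      · rw [if_neg (by omega)]
        have h1 : dlt p (v + 1) = 0 := dlt_high (by omega)
        have h2 : dlt p v = 0 := dlt_high (by omega)
        have h3 := topSum_p_stab hsum (v + 1) (by omega)
        have h4 := topSum_p_stab hsum v (by omega)
        rw [CQf, CQf, h1, h2, h3, h4]

lemma Qm_sum : (Qm p).sum = 2 * n := by
  have h := colSum_Qm hpos hsum hodd ((Qm p).sum + Multiset.card p)
  rw [colSum_stab (by omega)] at h
  rw [CQf, dlt_high (by omega), topSum_p_stab hsum _ (by omega)] at h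
  omega

omit hpos hsum hodd in
lemma Qm_pos : ∀ a ∈ Qm p, 0 < a := by
  intro a ha
  rw [Qm] at ha
  exact transpose_pos a ha

lemma CQ_even_odd : ∀ v, v % 2 = 1 → CQf p v % 2 = 0 := by
  intro v hv
  rcases lt_or_ge v (Multiset.card p) with h | h
  · have h1 : dlt p v = 1 := dlt_odd hv h
    have h2 := topSum_p_mod hpos hsum hodd v
    have h3 : min v (Multiset.card p) = v := by omega
    rw [CQf, h1]
    omega
  · have h1 : dlt p v = 0 := dlt_high h
    have h3 := topSum_p_stab hsum v h
    rw [CQf, h1, h3]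
    omega

lemma Qm_orth : IsOrthogonal (Qm p) := by
  apply colSum_even_orth (Qm_pos (p := p))
  intro v hv
  rw [colSum_Qm hpos hsum hodd, Nat.even_iff]
  exact CQ_even_odd hpos hsum hodd v hv

include hne in
lemma Qm_special : ∀ m', Even (topSum (Qm p) (2 * m')) := by
  intro m'
  rcases Nat.eq_zero_or_pos m' with rfl | hm'
  · rw [Nat.mul_zero, topSum_zero]
    exact Even.zero
  obtain ⟨v₁, hv₁N, heq, hA, hB⟩ := attain_row (Qm p) (2 * m')
  rw [colSum_Qm hpos hsum hodd] at heq
  rw [Qm_sum hpos hsum hodd] at heq hv₁N hB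
  have hfact : 2 * m' * v₁ = 2 * (m' * v₁) := by ring
  suffices hs : CQf p v₁ % 2 = 0 by
    rw [Nat.even_iff]
    omega
  rcases Nat.eq_zero_or_pos v₁ with rfl | hv₁pos
  · rw [CQf, topSum_zero, dlt_zero]
  rcases le_or_gt (Multiset.card p) v₁ with h | h
  · rw [CQf, dlt_high h, topSum_p_stab hsum v₁ h]
    omega
  rcases Nat.even_or_odd v₁ with hev | hodd'
  · have hv2 : v₁ % 2 = 0 := by rcases hev with ⟨t, ht⟩; omega
    by_cases heqF : FC p v₁ = FC p (v₁ + 1)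
    · exfalso
      have hke := kk_even hsum hodd
      have hkle := kk_le hpos hsum
      have hs1 : sCount (Qm p) v₁ = gQ p v₁ := by
        rw [sCount_Qm hpos hsum hodd v₁ (by omega), if_pos (by omega)]
      have hs2 : sCount (Qm p) (v₁ + 1) = gQ p (v₁ + 1) := by
        rw [sCount_Qm hpos hsum hodd (v₁ + 1) (by omega), if_pos (by omega)]
      have hg1 : gQ p v₁ = FC p v₁ := by
        rw [gQ, dlt_even_eq hv2 (by omega) h heqF, dlt_odd (by omega) (by omega)]
        omega
      have hg2 : gQ p (v₁ + 1) = FC p v₁ := by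
        have hsubst : v₁ + 1 - 1 = v₁ := by omega
        rw [gQ, hsubst, dlt_odd (by omega) (by omega), dlt_even_eq hv2 (by omega) h heqF]
        have := Fp_odd hpos hsum hodd (v₁ + 1) (by omega) (by omega)
        omega
      have hA' := hA (by omega)
      have hB' := hB (by omega)
      rw [hs1, hg1] at hA'
      rw [hs2, hg2] at hB'
      omega
    · rw [CQf, dlt_even_ne hv2 heqF]
      have h2 := topSum_p_mod hpos hsum hodd v₁
      have h3 : min v₁ (Multiset.card p) = v₁ := by omega
      omega
  · have hv2 : v₁ % 2 = 1 := by rcases hodd' with ⟨t, ht⟩; omega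
    exact CQ_even_odd hpos hsum hodd v₁ hv2

lemma CQ_le_colSum_Pm (hne : p ≠ 0) :
    ∀ v, CQf p v ≤ colSum (addPart (2 * nStar p - 1) ((1 : ℕ) ::ₘ (pOne p + pOne p))) v := by
  intro v
  rw [colSum_Pm_eq hne hpos hsum hodd v, CQf]
  have h1 : dlt p v ≤ (if 1 ≤ v ∧ v < Multiset.card p then 1 else 0) := by
    rw [dlt]; split_ifs <;> omega
  omega

lemma domLE_Qm_transpose : ∀ m, topSum (Qm p) m ≤ topSum (transpose p) m := by
  apply col_to_dom
  · rw [Qm_sum hpos hsum hodd, transpose_sum, hsum]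
  · intro v
    rw [colSum_transpose, colSum_Qm hpos hsum hodd, CQf]
    omega

lemma domLE_Pm_Qm (hne : p ≠ 0) :
    ∀ m, topSum (addPart (2 * nStar p - 1) ((1 : ℕ) ::ₘ (pOne p + pOne p))) m
      ≤ topSum (Qm p) m := by
  apply col_to_dom
  · rw [Qm_sum hpos hsum hodd, Pm_sum hne hsum hodd]
  · intro v
    rw [colSum_Qm hpos hsum hodd]
    exact CQ_le_colSum_Pm hpos hsum hodd hne v

/-- maximality of `Qm` among orthogonal partitions dominated by `transpose p`. -/
lemma collapse_max (c' : Multiset ℕ) (hc' : IsPartitionOf c' (transpose p).sum)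
    (horth : IsOrthogonal c') (hdom : ∀ m, topSum c' m ≤ topSum (transpose p) m) :
    ∀ m, topSum c' m ≤ topSum (Qm p) m := by
  have hcsum : c'.sum = 2 * n := by rw [hc'.2, transpose_sum, hsum]
  have hcol : ∀ v, colSum (transpose p) v ≤ colSum c' v :=
    dom_to_col (by rw [hcsum, transpose_sum, hsum]) hdom
  have hcol' : ∀ v, topSum p v ≤ colSum c' v := by
    intro v
    rw [← colSum_transpose]
    exact hcol v
  have hceven : ∀ v, v % 2 = 1 → colSum c' v % 2 = 0 := by
    intro v hv
    have := orth_colSum_even horth (by rw [hcsum]; exact ⟨n, by ring⟩) v hv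
    rw [Nat.even_iff] at this
    exact this
  apply col_to_dom (by rw [hcsum, Qm_sum hpos hsum hodd])
  intro v
  rw [colSum_Qm hpos hsum hodd, CQf]
  -- cases on dlt
  rcases Nat.eq_zero_or_pos v with rfl | hv1
  · rw [dlt_zero]
    exact hcol' 0
  rcases le_or_gt (Multiset.card p) v with hk | hk
  · rw [dlt_high hk]
    exact hcol' v
  rcases Nat.even_or_odd v with hev | hodd'
  · have hv2 : v % 2 = 0 := by rcases hev with ⟨t, ht⟩; omega
    by_cases heqF : FC p v = FC p (v + 1)
    · -- the hard case
      rw [dlt_even_eq hv2 hv1 hk heqF]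
      by_contra hcon
      have hceq : colSum c' v = topSum p v := by
        have := hcol' v
        omega
      have hke := kk_even hsum hodd
      -- v - 1 odd, < card p
      have hlow : topSum p (v - 1) + 1 ≤ colSum c' (v - 1) := by
        have hp1 := hcol' (v - 1)
        have hp2 := hceven (v - 1) (by omega)
        have hp3 := topSum_p_mod hpos hsum hodd (v - 1)
        have hp4 : min (v - 1) (Multiset.card p) = v - 1 := by omega
        omega
      have hhigh : topSum p (v + 1) + 1 ≤ colSum c' (v + 1) := by
        have hp1 := hcol' (v + 1)
        have hp2 := hceven (v + 1) (by omega)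
        have hp3 := topSum_p_mod hpos hsum hodd (v + 1)
        have hp4 : min (v + 1) (Multiset.card p) = v + 1 := by omega
        omega
      have e1 : v - 1 + 1 = v := by omega
      have c1 : colSum c' v = colSum c' (v - 1) + sCount c' v := by
        rw [← e1, colSum_succ, e1]
      have c2 := colSum_succ c' v
      have t1 : topSum p v = topSum p (v - 1) + FC p v := by
        have h := topSum_succ p (v - 1)
        rw [e1] at h
        exact h
      have t2 := topSum_succ p v
      have santi : sCount c' (v + 1) ≤ sCount c' v := sCount_anti c' (by omega)
      omega
    · rw [dlt_even_ne hv2 heqF]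
      exact hcol' v
  · have hv2 : v % 2 = 1 := by rcases hodd' with ⟨t, ht⟩; omega
    rw [dlt_odd hv2 hk]
    have hp2 := hceven v hv2
    have hp3 := topSum_p_mod hpos hsum hodd v
    have hp4 : min v (Multiset.card p) = v := by omega
    have hp1 := hcol' v
    omega

include hne in
/-- minimality of `Qm` among special orthogonal partitions dominating `P`. -/
lemma expansion_min (e' : Multiset ℕ)
    (hsym : IsSymplectic (transpose e'))
    (hesum : e'.sum = 2 * n)
    (hdom : ∀ m, topSum (addPart (2 * nStar p - 1) ((1 : ℕ) ::ₘ (pOne p + pOne p))) m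
      ≤ topSum e' m) :
    ∀ m, topSum (Qm p) m ≤ topSum e' m := by
  set Pm := addPart (2 * nStar p - 1) ((1 : ℕ) ::ₘ (pOne p + pOne p)) with hPmdef
  have hPsum : Pm.sum = 2 * n := Pm_sum hne hsum hodd
  have hEeven : ∀ j, Even (topSum e' (2 * j)) := sympl_transpose_topSum hsym
  intro m
  rcases Nat.eq_zero_or_pos m with rfl | hm
  · rw [topSum_zero, topSum_zero]
  obtain ⟨v₀, hv₀N, heq, hA, hB⟩ := attain_row Pm m
  rw [hPsum] at hv₀N heq hB
  have hQle := topSum_colSum_le (Qm p) m v₀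
  rw [colSum_Qm hpos hsum hodd, Qm_sum hpos hsum hodd] at hQle
  have hCP := colSum_Pm_eq hne hpos hsum hodd v₀
  rw [← hPmdef] at hCP
  have hEm := hdom m
  by_cases hc : 1 ≤ v₀ ∧ v₀ < Multiset.card p
  case neg =>
    rw [if_neg hc] at hCP
    have hdlt0 : dlt p v₀ = 0 := by
      rcases Nat.eq_zero_or_pos v₀ with rfl | h1
      · exact dlt_zero p
      · exact dlt_high (by omega)
    have hCQ0 : CQf p v₀ = topSum p v₀ := by rw [CQf, hdlt0]; omega
    omega
  case pos =>
    rw [if_pos hc] at hCP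
    have hke := kk_even hsum hodd
    have hkle := kk_le hpos hsum
    rcases Nat.even_or_odd v₀ with hev | hoddv
    case inr =>
      have hv2 : v₀ % 2 = 1 := by rcases hoddv with ⟨t, ht⟩; omega
      have hd1 : dlt p v₀ = 1 := dlt_odd hv2 hc.2
      have hCQ0 : CQf p v₀ = topSum p v₀ + 1 := by rw [CQf, hd1]
      omega
    case inl =>
    have hv2 : v₀ % 2 = 0 := by rcases hev with ⟨t, ht⟩; omega
    by_cases heqF : FC p v₀ = FC p (v₀ + 1)
    case pos =>
      have hd1 : dlt p v₀ = 1 := dlt_even_eq hv2 hc.1 hc.2 heqF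
      have hCQ0 : CQf p v₀ = topSum p v₀ + 1 := by rw [CQf, hd1]
      omega
    case neg =>
    have hdlt0 : dlt p v₀ = 0 := dlt_even_ne hv2 heqF
    have hCQ0 : CQf p v₀ = topSum p v₀ := by rw [CQf, hdlt0]; omega
    have hv0k1 : v₀ + 1 < Multiset.card p := by omega
    have e1 : v₀ - 1 + 1 = v₀ := by omega
    have hCP0 : colSum Pm (v₀ - 1) = topSum p (v₀ - 1) + 1 := by
      rw [hPmdef, colSum_Pm_eq hne hpos hsum hodd (v₀ - 1), if_pos (by omega)]
    have hCP2 : colSum Pm (v₀ + 1) = topSum p (v₀ + 1) + 1 := by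
      rw [hPmdef, colSum_Pm_eq hne hpos hsum hodd (v₀ + 1), if_pos (by omega)]
    have hsP1 : sCount Pm v₀ = FC p v₀ := by
      have c1 := colSum_succ Pm (v₀ - 1)
      rw [e1] at c1
      have t1 := topSum_succ p (v₀ - 1)
      rw [e1] at t1
      omega
    have hsP2 : sCount Pm (v₀ + 1) = FC p (v₀ + 1) := by
      have c2 := colSum_succ Pm v₀
      have t2 := topSum_succ p v₀
      omega
    have hA' : m ≤ FC p v₀ := by
      have h := hA (by omega)
      rw [hsP1] at h
      exact h
    have hB' : FC p (v₀ + 1) < m := by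
      have h := hB (by omega)
      rw [hsP2] at h
      exact h
    rcases eq_or_lt_of_le hA' with hmeq | hmlt
    case inl =>
      -- m = FC p v₀ : shift attainment to v₀ - 1
      have hQle2 := topSum_colSum_le (Qm p) m (v₀ - 1)
      rw [colSum_Qm hpos hsum hodd, Qm_sum hpos hsum hodd] at hQle2
      have hCQ1 : CQf p (v₀ - 1) = topSum p (v₀ - 1) + 1 := by
        rw [CQf, dlt_odd (by omega) (by omega)]
      have t1 := topSum_succ p (v₀ - 1)
      rw [e1] at t1
      obtain ⟨u, hu⟩ : ∃ u, v₀ = u + 1 := ⟨v₀ - 1, by omega⟩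
      have hmul : m * v₀ = m * (v₀ - 1) + m := by
        have hu2 : v₀ - 1 = u := by omega
        rw [hu2, hu, Nat.mul_succ]
      omega
    case inr =>
      rcases Nat.even_or_odd m with hmev | hmodd
      case inl =>
        have hm2 : m % 2 = 0 := by rcases hmev with ⟨t, ht⟩; omega
        have hQm_even : topSum (Qm p) m % 2 = 0 := by
          have h := Qm_special hne hpos hsum hodd (m / 2)
          rw [Nat.even_iff] at h
          have e : 2 * (m / 2) = m := by omega
          rw [e] at h
          exact h
        have hE_even : topSum e' m % 2 = 0 := by
          have h := hEeven (m / 2)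
          rw [Nat.even_iff] at h
          have e : 2 * (m / 2) = m := by omega
          rw [e] at h
          exact h
        have hmod := topSum_p_mod hpos hsum hodd v₀
        have hminv : min v₀ (Multiset.card p) = v₀ := by omega
        have hmv₀ : (m * v₀) % 2 = 0 := by
          obtain ⟨w, hw⟩ : ∃ w, v₀ = 2 * w := ⟨v₀ / 2, by omega⟩
          have hh : m * v₀ = 2 * (m * w) := by rw [hw]; ring
          omega
        omega
      case inr =>
        have hm2 : m % 2 = 1 := by rcases hmodd with ⟨t, ht⟩; omega
        have hFCle : FC Pm m ≤ v₀ := by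
          rw [FC]
          have hsub : (Finset.Icc 1 Pm.sum).filter (fun i => m ≤ sCount Pm i)
              ⊆ Finset.Icc 1 v₀ := by
            intro i hi
            rw [Finset.mem_filter, Finset.mem_Icc] at hi
            rw [Finset.mem_Icc]
            refine ⟨hi.1.1, ?_⟩
            by_contra hgt
            have hanti : sCount Pm i ≤ sCount Pm (v₀ + 1) := sCount_anti Pm (by omega)
            rw [hsP2] at hanti
            omega
          have := Finset.card_le_card hsub
          rw [Nat.card_Icc] at this
          omega
        have hFCge : v₀ ≤ FC Pm (m + 1) := by
          rw [FC]
          have hsub : Finset.Icc 1 v₀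
              ⊆ (Finset.Icc 1 Pm.sum).filter (fun i => m + 1 ≤ sCount Pm i) := by
            intro i hi
            rw [Finset.mem_Icc] at hi
            rw [Finset.mem_filter, Finset.mem_Icc]
            refine ⟨⟨hi.1, by rw [hPsum]; omega⟩, ?_⟩
            have hanti : sCount Pm v₀ ≤ sCount Pm i := sCount_anti Pm hi.2
            rw [hsP1] at hanti
            omega
          have := Finset.card_le_card hsub
          rw [Nat.card_Icc] at this
          omega
        have hFCanti : FC Pm (m + 1) ≤ FC Pm m := FC_anti Pm (by omega)
        have hFm : FC Pm m = v₀ := by omega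
        have hFm1 : FC Pm (m + 1) = v₀ := by omega
        have ei2 : m - 1 + 1 = m := by omega
        have tm' : topSum Pm m = topSum Pm (m - 1) + v₀ := by
          have h := topSum_succ Pm (m - 1)
          rw [ei2] at h
          rw [h, hFm]
        have tm1 : topSum Pm (m + 1) = topSum Pm m + v₀ := by
          rw [topSum_succ Pm m, hFm1]
        have hmod := topSum_p_mod hpos hsum hodd v₀
        have hminv : min v₀ (Multiset.card p) = v₀ := by omega
        have hmv₀ : (m * v₀) % 2 = 0 := by
          obtain ⟨w, hw⟩ : ∃ w, v₀ = 2 * w := ⟨v₀ / 2, by omega⟩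
          have hh : m * v₀ = 2 * (m * w) := by rw [hw]; ring
          omega
        have hEm1 := hdom (m - 1)
        have hEp1 := hdom (m + 1)
        have hEev1 : topSum e' (m - 1) % 2 = 0 := by
          have h := hEeven ((m - 1) / 2)
          rw [Nat.even_iff] at h
          have e : 2 * ((m - 1) / 2) = m - 1 := by omega
          rw [e] at h
          exact h
        have hEev2 : topSum e' (m + 1) % 2 = 0 := by
          have h := hEeven ((m + 1) / 2)
          rw [Nat.even_iff] at h
          have e : 2 * ((m + 1) / 2) = m + 1 := by omega
          rw [e] at h
          exact h
        have hconc := topSum_concave e' (m - 1)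
        have ei1 : m - 1 + 2 = m + 1 := by omega
        rw [ei1, ei2] at hconc
        omega

end Main


/-- `p` an orthogonal partition of `2n` all of whose parts are odd.
Then the number of parts `Σ_i a_i` is even, `2n* = Σ_i a_i`, and with
`P = [p₁ p₁ (2n*−1) 1]` one has `P^{SO_{2n}} = (p^t)_{SO_{2n}}`. -/
theorem expansion_eq_collapse_SO_even (n : ℕ) (p : Multiset ℕ) (hne : p ≠ 0)
    (hp : IsPartitionOf p (2 * n)) (horth : IsOrthogonal p)
    (hodd : ∀ a ∈ p, a % 2 = 1) :
    Even (Multiset.card p) ∧ 2 * nStar p = Multiset.card p ∧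
      ∀ e c : Multiset ℕ,
        IsSOEvenExpansion (addPart (2 * nStar p - 1) ((1 : ℕ) ::ₘ (pOne p + pOne p))) e →
        IsSOCollapse (transpose p) c → e = c := by
  obtain ⟨hpos, hsum⟩ := hp
  refine ⟨?_, nstar_eq hsum hodd, ?_⟩
  · rw [Nat.even_iff]
    exact kk_even hsum hodd
  intro e c He Hc
  have hPsum := Pm_sum hne hsum hodd
  have HQpartP : IsPartitionOf (Qm p)
      (addPart (2 * nStar p - 1) ((1 : ℕ) ::ₘ (pOne p + pOne p))).sum :=
    ⟨Qm_pos, by rw [Qm_sum hpos hsum hodd, hPsum]⟩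
  have HQorth : IsOrthogonal (Qm p) := Qm_orth hpos hsum hodd
  have HQsym : IsSymplectic (transpose (Qm p)) :=
    topSum_even_sympl (Qm_special hne hpos hsum hodd)
  have HdomPQ : domLE (addPart (2 * nStar p - 1) ((1 : ℕ) ::ₘ (pOne p + pOne p))) (Qm p) :=
    domLE_Pm_Qm hpos hsum hodd hne
  have h1 : domLE e (Qm p) := He.2.2.2.2 (Qm p) HQpartP HQorth HQsym HdomPQ
  have h2 : domLE (Qm p) e := by
    have hesum : e.sum = 2 * n := by rw [He.1.2, hPsum]
    exact expansion_min hne hpos hsum hodd e He.2.2.1 hesum He.2.2.2.1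
  have heQ : e = Qm p := dom_antisymm He.1 HQpartP h1 h2
  have HQpartT : IsPartitionOf (Qm p) (transpose p).sum :=
    ⟨Qm_pos, by rw [Qm_sum hpos hsum hodd, transpose_sum, hsum]⟩
  have h3 : domLE c (Qm p) := collapse_max hpos hsum hodd c Hc.1 Hc.2.1 Hc.2.2.1
  have h4 : domLE (Qm p) c :=
    Hc.2.2.2 (Qm p) HQpartT HQorth (domLE_Qm_transpose hpos hsum hodd)
  have hcQ : c = Qm p := dom_antisymm Hc.1 HQpartT h3 h4
  rw [heQ, hcQ]
end JiangWF
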